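/- Let S̄ be a finite set and let Ȳ^{(1)}, …, Ȳ^{(m)} be independent S̄-valued random variables, where Ȳ^{(i)} has distribution μ_i on S̄. Define the empirical distribution P_Y(s̄') = (1/m)·Σ_{i=1}^m 1{Ȳ^{(i)} = s̄'} and the average distribution P̄(s̄') = (1/m)·Σ_{i=1}^m μ_i(s̄'). Then for all ε > 0, Pr( Σ_{s̄'∈S̄} |P_Y(s̄') − P̄(s̄')| ≥ ε ) ≤ (2^{|S̄|} − 2)·exp(−m·ε²/2). -/

import Mathlib

open MeasureTheory ProbabilityTheory

set_option linter.unusedSectionVars false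

section aux
open Real

lemma hoeff_bern {p : ℝ} (hp0 : 0 ≤ p) (hp1 : p ≤ 1) (t : ℝ) :
    p * Real.exp (t * (1 - p)) + (1 - p) * Real.exp (t * (-p)) ≤ Real.exp (t ^ 2 / 8) := by
  have hexp : (1 : ℝ) ≤ Real.exp (t ^ 2 / 8) := by
    rw [← Real.exp_zero]; apply Real.exp_le_exp.2; positivity
  rcases hp0.eq_or_lt with h0 | h0
  · subst h0; simpa using hexp
  rcases hp1.eq_or_lt with h1 | h1
  · subst h1; simpa using hexp
  -- 0 < p < 1
  set q := 1 - p with hq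
  have hq0 : 0 < q := by simp [hq]; linarith
  have hD : ∀ s : ℝ, 0 < q + p * Real.exp s := fun s => by
    have := Real.exp_pos s; nlinarith
  set h : ℝ → ℝ := fun s => s ^ 2 / 8 + s * p - Real.log (q + p * Real.exp s) with hh
  set h' : ℝ → ℝ := fun s => s / 4 + p - p * Real.exp s / (q + p * Real.exp s) with hh'
  have hder : ∀ s : ℝ, HasDerivAt h (h' s) s := by
    intro s
    have hu : HasDerivAt (fun s : ℝ => q + p * Real.exp s) (p * Real.exp s) s :=
      ((Real.hasDerivAt_exp s).const_mul p).const_add q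
    have hlog : HasDerivAt (fun s : ℝ => Real.log (q + p * Real.exp s))
        (p * Real.exp s / (q + p * Real.exp s)) s := hu.log (hD s).ne'
    have h1 : HasDerivAt (fun s : ℝ => s ^ 2 / 8 + s * p)
        (s / 4 + p) s := by
      have := ((hasDerivAt_pow 2 s).div_const 8).add ((hasDerivAt_id s).mul_const p)
      refine this.congr_deriv ?_; ring
    exact h1.sub hlog
  have hder' : ∀ s : ℝ, HasDerivAt h'
      (1 / 4 - p * Real.exp s * q / (q + p * Real.exp s) ^ 2) s := by
    intro s
    have hu : HasDerivAt (fun s : ℝ => p * Real.exp s) (p * Real.exp s) s :=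
      (Real.hasDerivAt_exp s).const_mul p
    have hv : HasDerivAt (fun s : ℝ => q + p * Real.exp s) (p * Real.exp s) s :=
      ((Real.hasDerivAt_exp s).const_mul p).const_add q
    have hdiv := hu.div hv (hD s).ne'
    have h1 : HasDerivAt (fun s : ℝ => s / 4 + p) (1 / 4) s := by
      exact ((hasDerivAt_id s).div_const 4).add_const p
    have := h1.sub hdiv
    refine this.congr_deriv ?_
    field_simp
    ring
  have hdiff' : Differentiable ℝ h' := fun s => (hder' s).differentiableAt
  have hmono' : Monotone h' := by
    apply monotone_of_deriv_nonneg hdiff'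
    intro s
    rw [(hder' s).deriv]
    have he := Real.exp_pos s
    have hDs := hD s
    rw [sub_nonneg, div_le_iff₀ (by positivity)]
    nlinarith [sq_nonneg (q - p * Real.exp s)]
  have h'0 : h' 0 = 0 := by
    simp [hh', hq]
  have hkey : ∀ s : ℝ, 0 ≤ h s := by
    intro s
    have h0val : h 0 = 0 := by
      simp [hh, hq, Real.log_one]
    rcases le_total 0 s with hs | hs
    · have : MonotoneOn h (Set.Ici 0) := by
        apply monotoneOn_of_deriv_nonneg (convex_Ici 0)
          (Differentiable.continuous (fun x => (hder x).differentiableAt)).continuousOn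
        · intro x _; exact (hder x).differentiableAt.differentiableWithinAt
        · intro x hx
          rw [(hder x).deriv, ← h'0]
          exact hmono' (le_of_lt (by simpa using hx))
      have := this Set.self_mem_Ici hs hs
      rwa [h0val] at this
    · have : AntitoneOn h (Set.Iic 0) := by
        apply antitoneOn_of_deriv_nonpos (convex_Iic 0)
          (Differentiable.continuous (fun x => (hder x).differentiableAt)).continuousOn
        · intro x _; exact (hder x).differentiableAt.differentiableWithinAt
        · intro x hx
          rw [(hder x).deriv, ← h'0]
          exact hmono' (le_of_lt (by simpa using hx))
      have := this hs Set.self_mem_Iic hs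
      rwa [h0val] at this
  have hlogle : Real.log (q + p * Real.exp t) ≤ t ^ 2 / 8 + t * p := by
    have := hkey t
    simp only [hh] at this
    linarith
  have hDle : q + p * Real.exp t ≤ Real.exp (t ^ 2 / 8 + t * p) :=
    (Real.log_le_iff_le_exp (hD t)).1 hlogle
  calc p * Real.exp (t * (1 - p)) + (1 - p) * Real.exp (t * (-p))
      = Real.exp (-(t * p)) * (q + p * Real.exp t) := by
        rw [show t * (1 - p) = t + -(t*p) by ring, Real.exp_add, show t * (-p) = -(t*p) by ring, hq]
        ring
    _ ≤ Real.exp (-(t * p)) * Real.exp (t ^ 2 / 8 + t * p) := by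
        apply mul_le_mul_of_nonneg_left hDle (Real.exp_pos _).le
    _ = Real.exp (t ^ 2 / 8) := by rw [← Real.exp_add]; ring_nf

variable {Ω : Type*} [MeasurableSpace Ω] {μ : Measure Ω} [IsProbabilityMeasure μ]

lemma two_val_eq {E : Set Ω} [DecidablePred (· ∈ E)] (a b : ℝ) :
    (fun ω => if ω ∈ E then a else b)
      = fun ω => E.indicator (fun _ => a) ω + Eᶜ.indicator (fun _ => b) ω := by
  funext ω; by_cases h : ω ∈ E <;> simp [h]

lemma integrable_two_val {E : Set Ω} [DecidablePred (· ∈ E)] (hE : MeasurableSet E) (a b : ℝ) :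
    Integrable (fun ω => if ω ∈ E then a else b) μ := by
  rw [two_val_eq]
  exact ((integrable_const a).indicator hE).add ((integrable_const b).indicator hE.compl)

lemma compl_toReal {E : Set Ω} (hE : MeasurableSet E) :
    (μ Eᶜ).toReal = 1 - (μ E).toReal := by
  rw [prob_compl_eq_one_sub hE, ENNReal.toReal_sub_of_le prob_le_one ENNReal.one_ne_top]
  simp

lemma integral_two_val {E : Set Ω} [DecidablePred (· ∈ E)] (hE : MeasurableSet E) (a b : ℝ) :
    ∫ ω, (if ω ∈ E then a else b) ∂μ = a * (μ E).toReal + b * (1 - (μ E).toReal) := by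
  rw [two_val_eq, integral_add ((integrable_const a).indicator hE)
    ((integrable_const b).indicator hE.compl), integral_indicator_const _ hE,
    integral_indicator_const _ hE.compl, measureReal_def, measureReal_def, compl_toReal hE, smul_eq_mul, smul_eq_mul]
  ring

lemma mgf_two_val {E : Set Ω} [DecidablePred (· ∈ E)] (hE : MeasurableSet E) (t : ℝ) :
    mgf (fun ω => (if ω ∈ E then (1:ℝ) else 0) - (μ E).toReal) μ t
      = (μ E).toReal * Real.exp (t * (1 - (μ E).toReal))
        + (1 - (μ E).toReal) * Real.exp (t * (-(μ E).toReal)) := by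
  set p := (μ E).toReal
  have : (fun ω => Real.exp (t * ((if ω ∈ E then (1:ℝ) else 0) - p)))
      = fun ω => if ω ∈ E then Real.exp (t * (1 - p)) else Real.exp (t * (-p)) := by
    funext ω; by_cases h : ω ∈ E <;> simp [h]
  rw [mgf, this, integral_two_val hE]
  ring

lemma tail_bound (m : ℕ) (E : Fin m → Set Ω) (hE : ∀ i, MeasurableSet (E i))
    [∀ i, DecidablePred (· ∈ E i)]
    (hindep : iIndepFun
      (fun i ω => (if ω ∈ E i then (1:ℝ) else 0) - (μ (E i)).toReal) μ)
    (ε : ℝ) (hε : 0 < ε) :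
    μ {ω | (m:ℝ) * ε / 2 ≤ ∑ i, ((if ω ∈ E i then (1:ℝ) else 0) - (μ (E i)).toReal)}
      ≤ ENNReal.ofReal (Real.exp (-(m:ℝ) * ε^2 / 2)) := by
  set X : Fin m → Ω → ℝ := fun i ω => (if ω ∈ E i then (1:ℝ) else 0) - (μ (E i)).toReal with hX
  have hp0 : ∀ i, 0 ≤ (μ (E i)).toReal := fun i => ENNReal.toReal_nonneg
  have hp1 : ∀ i, (μ (E i)).toReal ≤ 1 := fun i => by
    simpa using ENNReal.toReal_mono ENNReal.one_ne_top (prob_le_one (μ := μ))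
  have hXmeas : ∀ i, Measurable (X i) := by
    intro i
    apply Measurable.sub _ measurable_const
    have : (fun ω => if ω ∈ E i then (1:ℝ) else 0) = (E i).indicator (fun _ => (1:ℝ)) := by
      funext ω; rw [Set.indicator_apply]
    rw [this]
    exact measurable_const.indicator (hE i)
  have hXbd : ∀ i ω, |X i ω| ≤ 1 := by
    intro i ω
    rw [abs_le]
    have h0 := hp0 i; have h1 := hp1 i
    by_cases h : ω ∈ E i <;>
      [simp only [hX, if_pos h]; simp only [hX, if_neg h]] <;> constructor <;> linarith
  set t : ℝ := 2 * ε with ht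
  have hXexp_eq : ∀ i, (fun ω => Real.exp (t * X i ω))
      = fun ω => if ω ∈ E i then Real.exp (t * (1 - (μ (E i)).toReal))
          else Real.exp (t * (-(μ (E i)).toReal)) := by
    intro i; funext ω; by_cases h : ω ∈ E i <;> simp [hX, h]
  have hXint : ∀ i, Integrable (fun ω => Real.exp (t * X i ω)) μ := by
    intro i; rw [hXexp_eq i]; exact integrable_two_val (hE i) _ _
  have hmgf : ∀ i, mgf (X i) μ t ≤ Real.exp (t ^ 2 / 8) := by
    intro i
    rw [hX, mgf_two_val (hE i) t]
    exact hoeff_bern (hp0 i) (hp1 i) t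
  -- sum
  set S : Ω → ℝ := fun ω => ∑ i, X i ω with hS
  have hSeq : S = ∑ i, X i := by funext ω; simp [hS]
  have hSmeas : Measurable S := by
    apply Finset.measurable_sum
    intro i _; exact hXmeas i
  have hSint : Integrable (fun ω => Real.exp (t * S ω)) μ := by
    apply Integrable.mono' (integrable_const (Real.exp (|t| * m)))
    · exact ((measurable_const.mul hSmeas).exp).aestronglyMeasurable
    · filter_upwards with ω
      rw [Real.norm_eq_abs, abs_of_pos (Real.exp_pos _)]
      apply Real.exp_le_exp.2
      calc t * S ω ≤ |t * S ω| := le_abs_self _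
        _ = |t| * |S ω| := abs_mul _ _
        _ ≤ |t| * m := by
            apply mul_le_mul_of_nonneg_left _ (abs_nonneg t)
            calc |S ω| ≤ ∑ i, |X i ω| := Finset.abs_sum_le_sum_abs _ _
              _ ≤ ∑ _i : Fin m, (1:ℝ) := Finset.sum_le_sum (fun i _ => hXbd i ω)
              _ = m := by simp
  have hcher := measure_ge_le_exp_mul_mgf (μ := μ) (X := S) ((m:ℝ) * ε / 2)
    (by positivity : (0:ℝ) ≤ t) hSint
  have hmgfS : mgf S μ t ≤ Real.exp ((m:ℝ) * t ^ 2 / 8) := by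
    rw [hSeq, hindep.mgf_sum hXmeas Finset.univ]
    calc ∏ i, mgf (X i) μ t ≤ ∏ _i : Fin m, Real.exp (t ^ 2 / 8) :=
          Finset.prod_le_prod (fun i _ => mgf_nonneg) (fun i _ => hmgf i)
      _ = Real.exp ((m:ℝ) * t ^ 2 / 8) := by
          rw [Finset.prod_const, ← Real.exp_nat_mul]
          congr 1; simp; ring
  rw [ENNReal.le_ofReal_iff_toReal_le (measure_ne_top μ _) (Real.exp_pos _).le]
  calc (μ {ω | (m:ℝ) * ε / 2 ≤ S ω}).toReal
      ≤ Real.exp (-t * ((m:ℝ) * ε / 2)) * mgf S μ t := hcher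
    _ ≤ Real.exp (-t * ((m:ℝ) * ε / 2)) * Real.exp ((m:ℝ) * t ^ 2 / 8) :=
        mul_le_mul_of_nonneg_left hmgfS (Real.exp_pos _).le
    _ = Real.exp (-(m:ℝ) * ε ^ 2 / 2) := by
        rw [← Real.exp_add]; congr 1; rw [ht]; ring

lemma measure_preimage_finset' {Sb : Type*} [Fintype Sb] [DecidableEq Sb]
    [MeasurableSpace Sb] [MeasurableSingletonClass Sb]
    {Y : Ω → Sb} (hY : Measurable Y) (A : Finset Sb) :
    (μ (Y ⁻¹' ↑A)).toReal = ∑ s ∈ A, (μ {ω | Y ω = s}).toReal := by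
  have h1 : Y ⁻¹' ↑A = ⋃ s ∈ A, {ω | Y ω = s} := by
    ext ω; simp
  rw [h1, measure_biUnion_finset, ENNReal.toReal_sum (fun s _ => measure_ne_top μ _)]
  · intro s _ t _ hst
    apply Set.disjoint_left.2
    intro ω h1 h2
    exact hst (by simp_all)
  · intro s _
    exact hY (measurableSet_singleton s)


end aux

theorem stmt2 {Ω : Type*} [MeasurableSpace Ω] (μ : Measure Ω) [IsProbabilityMeasure μ]
    {Sb : Type*} [Fintype Sb] [Nonempty Sb] [DecidableEq Sb]
    [MeasurableSpace Sb] [MeasurableSingletonClass Sb]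
    -- independent Sb-valued random variables Y 1, ..., Y m
    (m : ℕ) (Y : Fin m → Ω → Sb) (hYmeas : ∀ i, Measurable (Y i))
    (hindep : iIndepFun Y μ)
    -- Y i has distribution μi i
    (μi : Fin m → Sb → ℝ)
    (hdist : ∀ i sb, (μ {ω | Y i ω = sb}).toReal = μi i sb)
    (ε : ℝ) (hε : 0 < ε) :
    -- Pr(‖P_Y − P̄‖₁ ≥ ε) ≤ (2^|Sb| − 2)·exp(−m·ε²/2)
    μ {ω | ε ≤ ∑ sb : Sb,
        |(1 / (m : ℝ)) * ∑ i, (if Y i ω = sb then (1 : ℝ) else 0)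
          - (1 / (m : ℝ)) * ∑ i, μi i sb|}
      ≤ ENNReal.ofReal ((2 ^ (Fintype.card Sb) - 2) * Real.exp (-(m : ℝ) * ε ^ 2 / 2)) := by
  classical
  rcases Nat.eq_zero_or_pos m with hm | hm
  · subst hm
    have hset : {ω | ε ≤ ∑ sb : Sb,
        |(1 / ((0:ℕ) : ℝ)) * ∑ i, (if Y i ω = sb then (1 : ℝ) else 0)
          - (1 / ((0:ℕ) : ℝ)) * ∑ i, μi i sb|} = ∅ := by
      ext ω
      simp only [Set.mem_setOf_eq, Set.mem_empty_iff_false, iff_false, not_le]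
      have : ∀ sb : Sb, |(1 / ((0:ℕ) : ℝ)) * ∑ i, (if Y i ω = sb then (1 : ℝ) else 0)
          - (1 / ((0:ℕ) : ℝ)) * ∑ i, μi i sb| = 0 := by
        intro sb; simp
      rw [Finset.sum_congr rfl (fun sb _ => this sb)]
      simpa using hε
    rw [hset]
    simp
  -- m > 0
  have hm' : (0:ℝ) < m := by exact_mod_cast hm
  set a : Ω → Sb → ℝ := fun ω s => ∑ i, (if Y i ω = s then (1:ℝ) else 0) with ha
  set b : Sb → ℝ := fun s => ∑ i, μi i s with hb
  have hsum_a : ∀ ω, ∑ s, a ω s = m := by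
    intro ω
    rw [ha, Finset.sum_comm]
    have : ∀ i : Fin m, ∑ s, (if Y i ω = s then (1:ℝ) else 0) = 1 := by
      intro i
      rw [Finset.sum_ite_eq]
      simp
    rw [Finset.sum_congr rfl (fun i _ => this i)]
    simp
  have hmu_total : ∀ i, ∑ s, μi i s = 1 := by
    intro i
    have h1 := measure_preimage_finset' (μ := μ) (hYmeas i) Finset.univ
    have h2 : (Y i ⁻¹' ↑(Finset.univ : Finset Sb)) = Set.univ := by simp
    rw [h2] at h1
    simp only [measure_univ, ENNReal.toReal_one] at h1
    rw [← Finset.sum_congr rfl (fun s _ => hdist i s), ← h1]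
  have hsum_b : ∑ s, b s = m := by
    rw [hb, Finset.sum_comm]
    rw [Finset.sum_congr rfl (fun i _ => hmu_total i)]
    simp
  -- the per-subset events
  set T : Finset Sb → Set Ω := fun A =>
    {ω | (m:ℝ) * ε / 2 ≤ ∑ i, ((if ω ∈ Y i ⁻¹' ↑A then (1:ℝ) else 0)
      - (μ (Y i ⁻¹' ↑A)).toReal)} with hT
  have hTbound : ∀ A : Finset Sb,
      μ (T A) ≤ ENNReal.ofReal (Real.exp (-(m:ℝ) * ε^2 / 2)) := by
    intro A
    have hEmeas : ∀ i, MeasurableSet (Y i ⁻¹' ↑A) := fun i =>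
      (hYmeas i) (A.finite_toSet.measurableSet)
    have hindep' : iIndepFun
        (fun i ω => (if ω ∈ Y i ⁻¹' ↑A then (1:ℝ) else 0) - (μ (Y i ⁻¹' ↑A)).toReal) μ := by
      have h := hindep.comp
        (fun i (s : Sb) => (if s ∈ A then (1:ℝ) else 0) - (μ (Y i ⁻¹' ↑A)).toReal)
        (fun i => measurable_of_countable _)
      have hfun : (fun (i : Fin m) ω => (if ω ∈ Y i ⁻¹' ↑A then (1:ℝ) else 0)
          - (μ (Y i ⁻¹' ↑A)).toReal)
          = fun i => (fun s => (if s ∈ A then (1:ℝ) else 0) - (μ (Y i ⁻¹' ↑A)).toReal) ∘ Y i := by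
        funext i ω
        by_cases hmem : Y i ω ∈ A
        · simp [Function.comp, hmem]
        · simp [Function.comp, hmem]
      rw [hfun]; exact h
    exact tail_bound m (fun i => Y i ⁻¹' ↑A) hEmeas hindep' ε hε
  set 𝒜 : Finset (Finset Sb) :=
    Finset.univ.filter (fun A : Finset Sb => A.Nonempty ∧ A ≠ Finset.univ) with h𝒜
  have hincl : {ω | ε ≤ ∑ sb : Sb,
        |(1 / (m : ℝ)) * ∑ i, (if Y i ω = sb then (1 : ℝ) else 0)
          - (1 / (m : ℝ)) * ∑ i, μi i sb|} ⊆ ⋃ A ∈ 𝒜, T A := by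
    intro ω hω
    simp only [Set.mem_setOf_eq] at hω
    have hε' : (m:ℝ) * ε ≤ ∑ s, |a ω s - b s| := by
      have h1 : ∀ sb : Sb, |(1 / (m : ℝ)) * ∑ i, (if Y i ω = sb then (1 : ℝ) else 0)
          - (1 / (m : ℝ)) * ∑ i, μi i sb| = (1 / (m:ℝ)) * |a ω sb - b sb| := by
        intro sb
        rw [← mul_sub, abs_mul, abs_of_pos (by positivity : (0:ℝ) < 1 / (m:ℝ))]
      rw [Finset.sum_congr rfl (fun sb _ => h1 sb), ← Finset.mul_sum] at hω
      calc (m:ℝ) * ε ≤ (m:ℝ) * ((1 / (m:ℝ)) * ∑ s, |a ω s - b s|) := by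
            apply mul_le_mul_of_nonneg_left hω hm'.le
        _ = ∑ s, |a ω s - b s| := by field_simp
    set A : Finset Sb := Finset.univ.filter (fun s => b s < a ω s) with hA
    have e2 : ∑ s, (a ω s - b s) = 0 := by
      rw [Finset.sum_sub_distrib, hsum_a, hsum_b]; ring
    have e1 : ∑ s ∈ A, (a ω s - b s)
        + ∑ s ∈ Finset.univ.filter (fun s => ¬ b s < a ω s), (a ω s - b s) = 0 := by
      rw [Finset.sum_filter_add_sum_filter_not]; exact e2
    have e3 : ∑ s, |a ω s - b s| = ∑ s ∈ A, (a ω s - b s)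
        - ∑ s ∈ Finset.univ.filter (fun s => ¬ b s < a ω s), (a ω s - b s) := by
      rw [← Finset.sum_filter_add_sum_filter_not Finset.univ (fun s => b s < a ω s)
        (fun s => |a ω s - b s|)]
      have p1 : ∀ s ∈ A, |a ω s - b s| = a ω s - b s := by
        intro s hs
        rw [abs_of_pos]
        have := (Finset.mem_filter.1 hs).2
        linarith
      have p2 : ∀ s ∈ Finset.univ.filter (fun s => ¬ b s < a ω s),
          |a ω s - b s| = -(a ω s - b s) := by
        intro s hs
        rw [abs_of_nonpos]
        have := (Finset.mem_filter.1 hs).2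
        linarith
      rw [Finset.sum_congr rfl p1, Finset.sum_congr rfl p2, Finset.sum_neg_distrib]
      ring
    have hkey : (m:ℝ) * ε / 2 ≤ ∑ s ∈ A, (a ω s - b s) := by linarith
    have hAind : ∀ i, (if ω ∈ Y i ⁻¹' ↑A then (1:ℝ) else 0)
        = ∑ s ∈ A, (if Y i ω = s then (1:ℝ) else 0) := by
      intro i
      rw [Finset.sum_ite_eq]
      by_cases h : Y i ω ∈ A
      · simp [h]
      · simp [h]
    have hAp : ∀ i, (μ (Y i ⁻¹' ↑A)).toReal = ∑ s ∈ A, μi i s := by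
      intro i
      rw [measure_preimage_finset' (hYmeas i)]
      exact Finset.sum_congr rfl (fun s _ => hdist i s)
    have hmemT : ω ∈ T A := by
      simp only [hT, Set.mem_setOf_eq]
      have hsum : ∑ i, ((if ω ∈ Y i ⁻¹' ↑A then (1:ℝ) else 0) - (μ (Y i ⁻¹' ↑A)).toReal)
          = ∑ s ∈ A, (a ω s - b s) := by
        rw [Finset.sum_sub_distrib, Finset.sum_sub_distrib]
        congr 1
        · rw [Finset.sum_congr rfl (fun i _ => hAind i), Finset.sum_comm]
        · rw [Finset.sum_congr rfl (fun i _ => hAp i), Finset.sum_comm]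
      rw [hsum]; exact hkey
    have hApos : 0 < ∑ s ∈ A, (a ω s - b s) := lt_of_lt_of_le (by positivity) hkey
    have hAne : A.Nonempty := by
      rw [Finset.nonempty_iff_ne_empty]
      intro h
      rw [h] at hApos
      simp at hApos
    have hAneuniv : A ≠ Finset.univ := by
      intro h
      rw [h] at hApos
      rw [e2] at hApos
      exact lt_irrefl 0 hApos
    have hA𝒜 : A ∈ 𝒜 := by
      rw [h𝒜, Finset.mem_filter]
      exact ⟨Finset.mem_univ _, hAne, hAneuniv⟩
    exact Set.mem_biUnion hA𝒜 hmemT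
  have hcard : 𝒜.card = 2 ^ Fintype.card Sb - 2 := by
    have heq : 𝒜 = Finset.univ \ {∅, Finset.univ} := by
      ext A
      simp only [h𝒜, Finset.mem_filter, Finset.mem_univ, true_and, Finset.mem_sdiff,
        Finset.mem_insert, Finset.mem_singleton, Finset.nonempty_iff_ne_empty]
      tauto
    rw [heq, Finset.card_sdiff_of_subset (Finset.subset_univ _)]
    have h2 : ({∅, Finset.univ} : Finset (Finset Sb)).card = 2 := by
      rw [Finset.card_insert_of_notMem, Finset.card_singleton]
      simp only [Finset.mem_singleton]
      exact fun h => (Finset.univ_nonempty (α := Sb)).ne_empty h.symm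
    rw [h2, Finset.card_univ, Fintype.card_finset]
  calc μ {ω | ε ≤ ∑ sb : Sb,
        |(1 / (m : ℝ)) * ∑ i, (if Y i ω = sb then (1 : ℝ) else 0)
          - (1 / (m : ℝ)) * ∑ i, μi i sb|}
      ≤ μ (⋃ A ∈ 𝒜, T A) := measure_mono hincl
    _ ≤ ∑ A ∈ 𝒜, μ (T A) := measure_biUnion_finset_le _ _
    _ ≤ ∑ _A ∈ 𝒜, ENNReal.ofReal (Real.exp (-(m:ℝ) * ε^2 / 2)) :=
        Finset.sum_le_sum (fun A _ => hTbound A)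
    _ = (𝒜.card : ENNReal) * ENNReal.ofReal (Real.exp (-(m:ℝ) * ε^2 / 2)) := by
        rw [Finset.sum_const, nsmul_eq_mul]
    _ ≤ ENNReal.ofReal ((2 ^ (Fintype.card Sb) - 2) * Real.exp (-(m : ℝ) * ε ^ 2 / 2)) := by
        rw [hcard, ← ENNReal.ofReal_natCast, ← ENNReal.ofReal_mul (by positivity)]
        apply ENNReal.ofReal_le_ofReal
        have h2 : 2 ≤ 2 ^ Fintype.card Sb := by
          have hc : 1 ≤ Fintype.card Sb := Fintype.card_pos
          calc 2 = 2 ^ 1 := by norm_num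
            _ ≤ 2 ^ Fintype.card Sb := Nat.pow_le_pow_right (by norm_num) hc
        have : ((2 ^ Fintype.card Sb - 2 : ℕ) : ℝ) = 2 ^ Fintype.card Sb - 2 := by
          push_cast [Nat.cast_sub h2]
          ring
        rw [this]
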